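/- Let E be a monotonically complete Banach lattice with the Fatou property and let (T_i)_{i∈I} be a mutually commuting family of positive linear contractions on E. Then for every set G of vectors in the common fixed space F = {x : T_i x = x for all i} that has a supremum g_E in E, the set G also has a supremum g_F in F, and g_E ≤ g_F. -/

import Mathlib

section Aux

variable {E : Type*} [NormedAddCommGroup E] [Lattice E] [HasSolidNorm E] [IsOrderedAddMonoid E] [NormedSpace ℝ E]
variable {I : Type*}

/-- Composition of the operators `T i` along a word `w`. -/
def Tw (T : I → E →L[ℝ] E) (w : List I) (x : E) : E := w.foldr (fun i y => T i y) x

variable (T : I → E →L[ℝ] E)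

@[simp] lemma Tw_nil (x : E) : Tw T [] x = x := rfl

@[simp] lemma Tw_cons (i : I) (w : List I) (x : E) : Tw T (i :: w) x = T i (Tw T w x) := rfl

lemma Tw_append (v w : List I) (x : E) : Tw T (v ++ w) x = Tw T v (Tw T w x) := by
  induction v with
  | nil => rfl
  | cons i v ih => simp [Tw_cons, ih]

lemma T_mono (hpos : ∀ i, ∀ x : E, 0 ≤ x → 0 ≤ T i x) (i : I) {a b : E} (hab : a ≤ b) :
    T i a ≤ T i b := by
  have h := hpos i (b - a) (sub_nonneg.2 hab)
  rw [map_sub] at h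
  exact sub_nonneg.1 h

lemma Tw_mono (hpos : ∀ i, ∀ x : E, 0 ≤ x → 0 ≤ T i x) (w : List I) {a b : E} (hab : a ≤ b) :
    Tw T w a ≤ Tw T w b := by
  induction w with
  | nil => simpa using hab
  | cons i w ih => exact T_mono T hpos i ih

@[simp] lemma Tw_zero (w : List I) : Tw T w (0 : E) = 0 := by
  induction w with
  | nil => rfl
  | cons i w ih => simp [Tw_cons, ih]

lemma Tw_sub (w : List I) (a b : E) : Tw T w (a - b) = Tw T w a - Tw T w b := by
  induction w with
  | nil => rfl
  | cons i w ih => simp [Tw_cons, ih, map_sub]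

lemma Tw_fixed (w : List I) {p : E} (hp : ∀ i, T i p = p) : Tw T w p = p := by
  induction w with
  | nil => rfl
  | cons i w ih => simp [Tw_cons, ih, hp i]

lemma Tw_norm (hcontr : ∀ i, ‖T i‖ ≤ 1) (w : List I) (x : E) : ‖Tw T w x‖ ≤ ‖x‖ := by
  induction w with
  | nil => simp
  | cons i w ih =>
    have h1 := (T i).le_opNorm (Tw T w x)
    have h2 : ‖T i‖ * ‖Tw T w x‖ ≤ 1 * ‖Tw T w x‖ :=
      mul_le_mul_of_nonneg_right (hcontr i) (norm_nonneg _)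
    calc ‖Tw T (i :: w) x‖ = ‖T i (Tw T w x)‖ := rfl
      _ ≤ ‖T i‖ * ‖Tw T w x‖ := h1
      _ ≤ 1 * ‖Tw T w x‖ := h2
      _ = ‖Tw T w x‖ := one_mul _
      _ ≤ ‖x‖ := ih

lemma Tw_comm (hcomm : ∀ i j, (T i).comp (T j) = (T j).comp (T i)) (i : I) (w : List I) (x : E) :
    Tw T w (T i x) = T i (Tw T w x) := by
  induction w with
  | nil => rfl
  | cons j w ih =>
    have hji : T j (T i (Tw T w x)) = T i (T j (Tw T w x)) := by
      have := congrArg (fun (S : E →L[ℝ] E) => S (Tw T w x)) (hcomm j i)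
      simpa using this
    simp only [Tw_cons, ih, hji]

lemma Tw_le_T (hpos : ∀ i, ∀ x : E, 0 ≤ x → 0 ≤ T i x)
    (hcomm : ∀ i j, (T i).comp (T j) = (T j).comp (T i))
    {u : E} (hu : ∀ i, u ≤ T i u) (i : I) (w : List I) :
    Tw T w u ≤ T i (Tw T w u) := by
  rw [← Tw_comm T hcomm i w u]
  exact Tw_mono T hpos w (hu i)

lemma Tw_expand (hpos : ∀ i, ∀ x : E, 0 ≤ x → 0 ≤ T i x)
    (hcomm : ∀ i j, (T i).comp (T j) = (T j).comp (T i))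
    {u : E} (hu : ∀ i, u ≤ T i u) (w : List I) : u ≤ Tw T w u := by
  induction w with
  | nil => exact le_rfl
  | cons i w ih => exact le_trans ih (Tw_le_T T hpos hcomm hu i w)

end Aux

/-- Main theorem, part (d), first half: in a monotonically complete Banach lattice
with the Fatou property, for any commuting family of positive linear contractions,
every subset `G` of the common fixed space `F` that has a supremum `gE` in `E` also
has a supremum `gF` within `F`, and `gE ≤ gF`. -/
theorem sup_in_fixed_space_exists
    {E : Type*} [NormedAddCommGroup E] [Lattice E] [HasSolidNorm E] [IsOrderedAddMonoid E] [NormedSpace ℝ E] [CompleteSpace E]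
    -- `E` is monotonically complete: every norm-bounded increasing net in `E₊` has a supremum
    (hmc : ∀ D : Set E, D.Nonempty → DirectedOn (· ≤ ·) D → (∀ x ∈ D, 0 ≤ x) →
      (∃ C : ℝ, ∀ x ∈ D, ‖x‖ ≤ C) → ∃ b : E, IsLUB D b)
    -- `E` has the Fatou property
    (hfatou : ∀ (D : Set E) (b : E), D.Nonempty → DirectedOn (· ≤ ·) D →
      (∀ x ∈ D, 0 ≤ x) → IsLUB D b → ‖b‖ = ⨆ x : D, ‖(x : E)‖)
    {I : Type*} (T : I → E →L[ℝ] E)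
    (hpos : ∀ i, ∀ x : E, 0 ≤ x → 0 ≤ T i x) (hcontr : ∀ i, ‖T i‖ ≤ 1)
    (hcomm : ∀ i j, (T i).comp (T j) = (T j).comp (T i))
    (G : Set E) (hG : ∀ x ∈ G, ∀ i, T i x = x)
    (gE : E) (hlub : IsLUB G gE) :
    ∃ gF : E, gE ≤ gF ∧
      IsLeast {h : E | (∀ i, T i h = h) ∧ ∀ x ∈ G, x ≤ h} gF := by
  rcases G.eq_empty_or_nonempty with hGe | ⟨x₀, hx₀⟩
  · -- Degenerate case : `G = ∅`, so `gE` is a bottom element, hence `gE = 0 ≤` everything.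
    subst hGe
    have hle : ∀ x : E, gE ≤ x := fun x =>
      hlub.2 (fun a ha => absurd ha (Set.notMem_empty a))
    have h0 : gE = 0 := by
      have h1 := hle 0
      have h2 := hle (gE + gE)
      have h3 : (0 : E) ≤ gE := by
        have := sub_le_sub_right h2 gE
        simpa using this
      exact le_antisymm h1 h3
    refine ⟨0, by rw [h0], ⟨fun i => map_zero _, fun x hx => absurd hx (Set.notMem_empty x)⟩, ?_⟩
    intro h _
    have := hle h
    rwa [h0] at this
  · -- Main case.
    have hx₀fix : ∀ i, T i x₀ = x₀ := hG x₀ hx₀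
    have hx₀gE : x₀ ≤ gE := hlub.1 hx₀
    set C := ‖gE - x₀‖ with hC
    set S : Set E := {h | gE ≤ h ∧ (∀ j, h ≤ T j h) ∧ ‖h - x₀‖ ≤ C ∧
        ∀ p : E, (∀ i, T i p = p) → (∀ x ∈ G, x ≤ p) → h ≤ p} with hS
    -- `gE` belongs to `S`.
    have hgES : gE ∈ S := by
      refine ⟨le_rfl, ?_, le_rfl, ?_⟩
      · intro j
        refine hlub.2 (fun x hx => ?_)
        calc x = T j x := (hG x hx j).symm
          _ ≤ T j gE := T_mono T hpos j (hlub.1 hx)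
      · intro p _ hpub
        exact hlub.2 hpub
    -- The key expansion step.
    have step : ∀ h ∈ S, ∃ h', h' ∈ S ∧ h ≤ h' ∧ ∀ j, T j h ≤ h' := by
      intro h hhS
      obtain ⟨h1, h2, h3, h4⟩ := hhS
      set u := h - x₀ with hu
      have hxu : x₀ + u = h := by rw [hu]; abel
      have hu0 : (0 : E) ≤ u := sub_nonneg.2 (le_trans hx₀gE h1)
      have huT : ∀ i, u ≤ T i u := by
        intro i
        have hTu : T i u = T i h - x₀ := by rw [hu, map_sub, hx₀fix i]
        rw [hTu, hu]
        exact sub_le_sub_right (h2 i) x₀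
      set D := Set.range (fun w : List I => Tw T w u) with hD
      have hDne : D.Nonempty := ⟨u, ⟨[], rfl⟩⟩
      have hDdir : DirectedOn (· ≤ ·) D := by
        rintro x ⟨w, rfl⟩ y ⟨v, rfl⟩
        refine ⟨Tw T (w ++ v) u, ⟨w ++ v, rfl⟩, ?_, ?_⟩
        · rw [Tw_append]
          exact Tw_mono T hpos w (Tw_expand T hpos hcomm huT v)
        · rw [Tw_append]
          exact Tw_expand T hpos hcomm (fun i => Tw_le_T T hpos hcomm huT i v) w
      have hDpos : ∀ x ∈ D, 0 ≤ x := by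
        rintro x ⟨w, rfl⟩
        have := Tw_mono T hpos w hu0
        simpa using this
      obtain ⟨b, hb⟩ := hmc D hDne hDdir hDpos
        ⟨‖u‖, by rintro x ⟨w, rfl⟩; exact Tw_norm T hcontr w u⟩
      have hub : u ≤ b := hb.1 ⟨[], rfl⟩
      have hbnorm : ‖b‖ ≤ C := by
        have hfe := hfatou D b hDne hDdir hDpos hb
        rw [hfe]
        haveI : Nonempty D := hDne.to_subtype
        refine ciSup_le ?_
        rintro ⟨x, w, rfl⟩
        calc ‖Tw T w u‖ ≤ ‖u‖ := Tw_norm T hcontr w u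
          _ ≤ C := h3
      refine ⟨x₀ + b, ⟨?_, ?_, ?_, ?_⟩, ?_, ?_⟩
      · calc gE ≤ h := h1
          _ = x₀ + u := hxu.symm
          _ ≤ x₀ + b := add_le_add_right hub x₀
      · intro j
        have hbTb : b ≤ T j b := by
          refine hb.2 ?_
          rintro x ⟨w, rfl⟩
          exact le_trans (Tw_le_T T hpos hcomm huT j w) (T_mono T hpos j (hb.1 ⟨w, rfl⟩))
        calc x₀ + b ≤ x₀ + T j b := add_le_add_right hbTb x₀
          _ = T j (x₀ + b) := by rw [map_add, hx₀fix j]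
      · have : x₀ + b - x₀ = b := by abel
        rw [this]
        exact hbnorm
      · intro p hp hpub
        have hbp : b ≤ p - x₀ := by
          refine hb.2 ?_
          rintro x ⟨w, rfl⟩
          show Tw T w u ≤ p - x₀
          have h5 : Tw T w u = Tw T w h - x₀ := by
            rw [hu, Tw_sub, Tw_fixed T w hx₀fix]
          rw [h5]
          refine sub_le_sub_right ?_ x₀
          calc Tw T w h ≤ Tw T w p := Tw_mono T hpos w (h4 p hp hpub)
            _ = p := Tw_fixed T w hp
        calc x₀ + b ≤ x₀ + (p - x₀) := add_le_add_right hbp x₀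
          _ = p := by abel
      · calc h = x₀ + u := hxu.symm
          _ ≤ x₀ + b := add_le_add_right hub x₀
      · intro j
        have hj : T j u ≤ b := hb.1 ⟨[j], rfl⟩
        have hTj : T j h = x₀ + T j u := by
          rw [hu, map_sub, hx₀fix j]; abel
        rw [hTj]
        exact add_le_add_right hj x₀
    -- Chains in `S` have upper bounds in `S`.
    have hchain : ∀ c ⊆ S, IsChain (· ≤ ·) c → ∀ y ∈ c, ∃ ub ∈ S, ∀ z ∈ c, z ≤ ub := by
      intro c hcS hcch y hyc
      set Dc := (fun h : E => h - x₀) '' c with hDc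
      have hDcne : Dc.Nonempty := ⟨y - x₀, ⟨y, hyc, rfl⟩⟩
      have hDcdir : DirectedOn (· ≤ ·) Dc := by
        rintro x ⟨a, hac, rfl⟩ z ⟨e, hec, rfl⟩
        rcases hcch.total hac hec with hae | hea
        · exact ⟨e - x₀, ⟨e, hec, rfl⟩, sub_le_sub_right hae x₀, le_rfl⟩
        · exact ⟨a - x₀, ⟨a, hac, rfl⟩, le_rfl, sub_le_sub_right hea x₀⟩
      have hDcpos : ∀ x ∈ Dc, 0 ≤ x := by
        rintro x ⟨a, hac, rfl⟩
        exact sub_nonneg.2 (le_trans hx₀gE (hcS hac).1)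
      have hDcbd : ∃ C' : ℝ, ∀ x ∈ Dc, ‖x‖ ≤ C' := by
        refine ⟨C, ?_⟩
        rintro x ⟨a, hac, rfl⟩
        exact (hcS hac).2.2.1
      obtain ⟨m, hm⟩ := hmc Dc hDcne hDcdir hDcpos hDcbd
      refine ⟨x₀ + m, ⟨?_, ?_, ?_, ?_⟩, ?_⟩
      · have hym : y - x₀ ≤ m := hm.1 ⟨y, hyc, rfl⟩
        calc gE ≤ y := (hcS hyc).1
          _ = x₀ + (y - x₀) := by abel
          _ ≤ x₀ + m := add_le_add_right hym x₀
      · intro j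
        have hmTm : m ≤ T j m := by
          refine hm.2 ?_
          rintro x ⟨a, hac, rfl⟩
          have h6 : a - x₀ ≤ T j (a - x₀) := by
            rw [map_sub, hx₀fix j]
            exact sub_le_sub_right ((hcS hac).2.1 j) x₀
          exact le_trans h6 (T_mono T hpos j (hm.1 ⟨a, hac, rfl⟩))
        calc x₀ + m ≤ x₀ + T j m := add_le_add_right hmTm x₀
          _ = T j (x₀ + m) := by rw [map_add, hx₀fix j]
      · have h7 : x₀ + m - x₀ = m := by abel
        rw [h7]
        have hfe := hfatou Dc m hDcne hDcdir hDcpos hm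
        rw [hfe]
        haveI : Nonempty Dc := hDcne.to_subtype
        refine ciSup_le ?_
        rintro ⟨x, a, hac, rfl⟩
        exact (hcS hac).2.2.1
      · intro p hp hpub
        have hmp : m ≤ p - x₀ := by
          refine hm.2 ?_
          rintro x ⟨a, hac, rfl⟩
          exact sub_le_sub_right ((hcS hac).2.2.2 p hp hpub) x₀
        calc x₀ + m ≤ x₀ + (p - x₀) := add_le_add_right hmp x₀
          _ = p := by abel
      · intro z hzc
        have : z - x₀ ≤ m := hm.1 ⟨z, hzc, rfl⟩
        calc z = x₀ + (z - x₀) := by abel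
          _ ≤ x₀ + m := add_le_add_right this x₀
    obtain ⟨gF, hgEgF, hgFS, hmax⟩ := zorn_le_nonempty₀ S hchain gE hgES
    obtain ⟨h', hh'S, hle', hTle⟩ := step gF hgFS
    have heq : h' ≤ gF := hmax hh'S hle'
    have hfix : ∀ i, T i gF = gF :=
      fun i => le_antisymm (le_trans (hTle i) heq) (hgFS.2.1 i)
    exact ⟨gF, hgEgF, ⟨⟨hfix, fun x hx => le_trans (hlub.1 hx) hgEgF⟩,
      fun p hp => hgFS.2.2.2 p hp.1 hp.2⟩⟩
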